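/- arXiv:2511.22643 — 2 statements merged into one kernel-verified Lean document; each statement's English description precedes it below -/
import Mathlib

section
/- Policy-outcome representation as weighted marginal treatment responses (Section 3.4, expected outcome under a policy): 𝔼[Y] = ∫_{(0,1)²} [ φ^{11}(v₀,v₁)·ℙ(P₀ ≥ v₀ and P₁ ≥ v₁) + φ^{10}(v₀,v₁)·ℙ(P₀ ≥ v₀ and P₁ < v₁) + φ^{01}(v₀,v₁)·ℙ(P₀ < v₀ and P₁ ≥ v₁) + φ^{00}(v₀,v₁)·ℙ(P₀ < v₀ and P₁ < v₁) ]·c(v₀,v₁) dv₀ dv₁; that is, the expected observed outcome under any policy whose propensity scores are independent of the unobservables is a weighted integral of the four marginal treatment response functions against the copula density, with weights given by the policy's joint propensity-score distribution. -/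
open MeasureTheory ProbabilityTheory


namespace PolicyOutcomeAux

noncomputable def wgt (d : Bool) (p t : ℝ) : ℝ :=
  if d then (if t ≤ p then 1 else 0) else (if p < t then 1 else 0)

lemma wgt_true (p t : ℝ) : wgt true p t = if t ≤ p then 1 else 0 := by simp [wgt]

lemma wgt_false (p t : ℝ) : wgt false p t = if p < t then 1 else 0 := by simp [wgt]

lemma wgt_false_eq (p t : ℝ) : wgt false p t = 1 - wgt true p t := by
  by_cases h : t ≤ p
  · simp [wgt, h, not_lt.mpr h]
  · simp [wgt, h, not_le.mp h]

lemma wgt_nonneg (d : Bool) (p t : ℝ) : 0 ≤ wgt d p t := by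
  cases d <;> unfold wgt <;> simp only [Bool.false_eq_true, if_false, if_true] <;>
    split <;> norm_num

lemma wgt_le_one (d : Bool) (p t : ℝ) : wgt d p t ≤ 1 := by
  cases d <;> unfold wgt <;> simp only [Bool.false_eq_true, if_false, if_true] <;>
    split <;> norm_num

lemma wgt_abs_le (d : Bool) (p t : ℝ) : |wgt d p t| ≤ 1 := by
  rw [abs_of_nonneg (wgt_nonneg d p t)]; exact wgt_le_one d p t

lemma measurable_wgt {α} [MeasurableSpace α] (d : Bool) {f g : α → ℝ}
    (hf : Measurable f) (hg : Measurable g) :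
    Measurable (fun a => wgt d (f a) (g a)) := by
  cases d
  · simpa [wgt] using Measurable.ite (measurableSet_lt hf hg) measurable_const measurable_const
  · simpa [wgt] using Measurable.ite (measurableSet_le hg hf) measurable_const measurable_const

lemma measurable_indicator_of_continuousOn {s : Set (ℝ × ℝ)} {f : ℝ × ℝ → ℝ}
    (hs : IsOpen s) (hf : ContinuousOn f s) : Measurable (s.indicator f) := by
  classical
  refine measurable_of_isOpen fun u hu => ?_
  have h : s.indicator f ⁻¹' u
      = (s ∩ f ⁻¹' u) ∪ (sᶜ ∩ (if (0:ℝ) ∈ u then Set.univ else ∅)) := by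
    ext x
    by_cases hx : x ∈ s <;> by_cases h0 : (0:ℝ) ∈ u <;>
      simp [Set.indicator_apply, hx, h0]
  rw [h]
  refine ((hf.isOpen_inter_preimage hs hu).measurableSet).union
    (hs.measurableSet.compl.inter ?_)
  split <;> simp

lemma integral_add4 {α : Type*} [MeasurableSpace α] (μ : Measure α) {f1 f2 f3 f4 : α → ℝ}
    (h1 : Integrable f1 μ) (h2 : Integrable f2 μ) (h3 : Integrable f3 μ)
    (h4 : Integrable f4 μ) :
    ∫ a, f1 a + f2 a + f3 a + f4 a ∂μ
      = (∫ a, f1 a ∂μ) + (∫ a, f2 a ∂μ) + (∫ a, f3 a ∂μ) + ∫ a, f4 a ∂μ := by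
  have h12 : Integrable (fun a => f1 a + f2 a) μ := h1.add h2
  have h123 : Integrable (fun a => f1 a + f2 a + f3 a) μ := h12.add h3
  rw [integral_add h123 h4, integral_add h12 h3, integral_add h1 h2]

end PolicyOutcomeAux

open PolicyOutcomeAux in
/-- Policy-outcome representation as weighted marginal treatment responses (Section 3.4):
the expected observed outcome under a policy whose propensity scores `(P₀,P₁)` are
independent of the unobservables is a weighted integral of the four marginal treatment
response functions against the copula density, with weights given by the policy's joint
propensity-score distribution. -/
theorem policy_outcome_representation
    {Ω 𝒰 : Type*} [MeasurableSpace Ω] [MeasurableSpace 𝒰]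
    (μ : Measure Ω) [IsProbabilityMeasure μ]
    (U : Ω → 𝒰) (V₀ V₁ : Ω → ℝ)
    (hU : Measurable U) (hV₀ : Measurable V₀) (hV₁ : Measurable V₁)
    -- V₀, V₁ uniformly distributed on (0,1)
    (hV₀unif : Measure.map V₀ μ = volume.restrict (Set.Ioo (0:ℝ) 1))
    (hV₁unif : Measure.map V₁ μ = volume.restrict (Set.Ioo (0:ℝ) 1))
    -- the policy's propensity scores, with values in [0,1], independent of (V₀,V₁,U)
    (P₀ P₁ : Ω → ℝ) (hP₀ : Measurable P₀) (hP₁ : Measurable P₁)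
    (hP₀mem : ∀ ω, P₀ ω ∈ Set.Icc (0:ℝ) 1) (hP₁mem : ∀ ω, P₁ ω ∈ Set.Icc (0:ℝ) 1)
    (hPindep : IndepFun (fun ω => (P₀ ω, P₁ ω)) (fun ω => (V₀ ω, V₁ ω, U ω)) μ)
    -- bounded measurable outcome function (`true` codes treatment 1, `false` codes 0)
    (m : Bool → Bool → 𝒰 → ℝ) (hm : ∀ d d', Measurable (m d d'))
    (hm_bdd : ∃ B, ∀ d d' u, |m d d' u| ≤ B)
    -- treatments and observed outcome under the policy
    (D₀ D₁ : Ω → Bool)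
    (hD₀ : ∀ ω, D₀ ω = decide (V₀ ω ≤ P₀ ω)) (hD₁ : ∀ ω, D₁ ω = decide (V₁ ω ≤ P₁ ω))
    (Y : Ω → ℝ) (hY : ∀ ω, Y ω = m (D₀ ω) (D₁ ω) (U ω))
    -- the joint law of (V₀,V₁) has density c w.r.t. 2-dimensional Lebesgue measure,
    -- concentrated on (0,1)², continuous, bounded above and away from zero there
    (c : ℝ × ℝ → ℝ) (hc_meas : Measurable c) (hc_nonneg : ∀ x, 0 ≤ c x)
    (hc_density : Measure.map (fun ω => (V₀ ω, V₁ ω)) μ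
      = volume.withDensity fun x => ENNReal.ofReal (c x))
    (hc_supp : ∀ x : ℝ × ℝ, x ∉ Set.Ioo (0:ℝ) 1 ×ˢ Set.Ioo (0:ℝ) 1 → c x = 0)
    (hc_cont : ContinuousOn c (Set.Ioo (0:ℝ) 1 ×ˢ Set.Ioo (0:ℝ) 1))
    (hc_bdd : ∃ B, ∀ x ∈ Set.Ioo (0:ℝ) 1 ×ˢ Set.Ioo (0:ℝ) 1, c x ≤ B)
    (hc_pos : ∃ ε > (0:ℝ), ∀ x ∈ Set.Ioo (0:ℝ) 1 ×ˢ Set.Ioo (0:ℝ) 1, ε ≤ c x)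
    -- continuous bounded marginal treatment response functions φ^{dd'}
    (φ : Bool → Bool → ℝ × ℝ → ℝ)
    (hφ_cont : ∀ d d', ContinuousOn (φ d d') (Set.Ioo (0:ℝ) 1 ×ˢ Set.Ioo (0:ℝ) 1))
    (hφ_bdd : ∃ B, ∀ d d' x, |φ d d' x| ≤ B)
    (hφ_disint : ∀ d d', ∀ p ∈ Set.Ioc (0:ℝ) 1, ∀ q ∈ Set.Ioc (0:ℝ) 1,
      (∫ ω, m d d' (U ω) * (if V₀ ω ≤ p then (1:ℝ) else 0)
        * (if V₁ ω ≤ q then (1:ℝ) else 0) ∂μ)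
      = ∫ x in Set.Ioc (0:ℝ) p ×ˢ Set.Ioc (0:ℝ) q, φ d d' x * c x) :
    ∫ ω, Y ω ∂μ
      = ∫ x in Set.Ioo (0:ℝ) 1 ×ˢ Set.Ioo (0:ℝ) 1,
          (φ true true x * (μ {ω | x.1 ≤ P₀ ω ∧ x.2 ≤ P₁ ω}).toReal
            + φ true false x * (μ {ω | x.1 ≤ P₀ ω ∧ P₁ ω < x.2}).toReal
            + φ false true x * (μ {ω | P₀ ω < x.1 ∧ x.2 ≤ P₁ ω}).toReal
            + φ false false x * (μ {ω | P₀ ω < x.1 ∧ P₁ ω < x.2}).toReal) * c x := by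
  classical
  set S : Set (ℝ × ℝ) := Set.Ioo (0:ℝ) 1 ×ˢ Set.Ioo (0:ℝ) 1 with hS_def
  have hS_open : IsOpen S := isOpen_Ioo.prod isOpen_Ioo
  have hS_meas : MeasurableSet S := hS_open.measurableSet
  have hS_vol : volume S = 1 := by
    rw [hS_def, Measure.volume_eq_prod, Measure.prod_prod, Real.volume_Ioo]
    simp
  haveI hfin : IsFiniteMeasure (volume.restrict S) := by
    constructor
    rw [Measure.restrict_apply_univ, hS_vol]
    exact ENNReal.one_lt_top
  -- bounds
  obtain ⟨Bφ₀, hBφ₀⟩ := hφ_bdd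
  obtain ⟨Bc₀, hBc₀⟩ := hc_bdd
  obtain ⟨Bm₀, hBm₀⟩ := hm_bdd
  set Bφ : ℝ := max Bφ₀ 0 with hBφ_def
  set Bc : ℝ := max Bc₀ 0 with hBc_def
  set Bm : ℝ := max Bm₀ 0 with hBm_def
  have hBφ : ∀ d d' x, |φ d d' x| ≤ Bφ := fun d d' x => (hBφ₀ d d' x).trans (le_max_left _ _)
  have hBc : ∀ x ∈ S, c x ≤ Bc := fun x hx => (hBc₀ x hx).trans (le_max_left _ _)
  have hBm : ∀ d d' u, |m d d' u| ≤ Bm := fun d d' u => (hBm₀ d d' u).trans (le_max_left _ _)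
  have hBφ0 : (0:ℝ) ≤ Bφ := le_max_right _ _
  have hBc0 : (0:ℝ) ≤ Bc := le_max_right _ _
  have hBm0 : (0:ℝ) ≤ Bm := le_max_right _ _
  -- the products g = φ · c
  set g : Bool → Bool → ℝ × ℝ → ℝ := fun d d' x => φ d d' x * c x with hg_def
  have hg_eq_indicator : ∀ d d', g d d' = S.indicator (g d d') := by
    intro d d'; funext x
    by_cases hx : x ∈ S
    · rw [Set.indicator_of_mem hx]
    · rw [Set.indicator_of_notMem hx]
      simp only [hg_def, hc_supp x hx, mul_zero]
  have hg_meas : ∀ d d', Measurable (g d d') := by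
    intro d d'
    rw [hg_eq_indicator d d']
    exact measurable_indicator_of_continuousOn hS_open ((hφ_cont d d').mul hc_cont)
  set Cg : ℝ := Bφ * Bc with hCg_def
  have hCg0 : (0:ℝ) ≤ Cg := mul_nonneg hBφ0 hBc0
  have hg_bdd : ∀ d d' x, |g d d' x| ≤ Cg := by
    intro d d' x
    by_cases hx : x ∈ S
    · simp only [hg_def]
      calc |φ d d' x * c x| = |φ d d' x| * |c x| := abs_mul _ _
        _ ≤ Bφ * Bc := by
            refine mul_le_mul (hBφ d d' x) ?_ (abs_nonneg _) hBφ0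
            rw [abs_of_nonneg (hc_nonneg x)]; exact hBc x hx
    · simp only [hg_def, hc_supp x hx, mul_zero, abs_zero]; exact hCg0
  -- integrability on the ω side
  have hterm_bdd : ∀ (d d' d₁ d₂ : Bool) (p q v₀ v₁ : ℝ) (u : 𝒰),
      |m d d' u * wgt d₁ p v₀ * wgt d₂ q v₁| ≤ Bm := by
    intro d d' d₁ d₂ p q v₀ v₁ u
    calc |m d d' u * wgt d₁ p v₀ * wgt d₂ q v₁|
        = |m d d' u| * |wgt d₁ p v₀| * |wgt d₂ q v₁| := by rw [abs_mul, abs_mul]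
      _ ≤ Bm * 1 * 1 := by
          refine mul_le_mul (mul_le_mul (hBm d d' u) (wgt_abs_le _ _ _) (abs_nonneg _) hBm0)
            (wgt_abs_le _ _ _) (abs_nonneg _) (by linarith)
      _ = Bm := by ring
  have hmeasΩ : ∀ (d d' d₁ d₂ : Bool) (p q : ℝ),
      Measurable (fun ω => m d d' (U ω) * wgt d₁ p (V₀ ω) * wgt d₂ q (V₁ ω)) :=
    fun d d' d₁ d₂ p q =>
      (((hm d d').comp hU).mul (measurable_wgt d₁ measurable_const hV₀)).mul
        (measurable_wgt d₂ measurable_const hV₁)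
  have hIntΩ : ∀ (d d' d₁ d₂ : Bool) (p q : ℝ),
      Integrable (fun ω => m d d' (U ω) * wgt d₁ p (V₀ ω) * wgt d₂ q (V₁ ω)) μ := by
    intro d d' d₁ d₂ p q
    refine (integrable_const Bm).mono' (hmeasΩ d d' d₁ d₂ p q).aestronglyMeasurable
      (ae_of_all _ fun ω => ?_)
    rw [Real.norm_eq_abs]; exact hterm_bdd d d' d₁ d₂ p q _ _ _
  -- integrability on the x side
  have hgw_bdd : ∀ (d d' d₁ d₂ : Bool) (p q : ℝ) (x : ℝ × ℝ),
      |g d d' x * wgt d₁ p x.1 * wgt d₂ q x.2| ≤ Cg := by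
    intro d d' d₁ d₂ p q x
    calc |g d d' x * wgt d₁ p x.1 * wgt d₂ q x.2|
        = |g d d' x| * |wgt d₁ p x.1| * |wgt d₂ q x.2| := by rw [abs_mul, abs_mul]
      _ ≤ Cg * 1 * 1 := by
          refine mul_le_mul (mul_le_mul (hg_bdd d d' x) (wgt_abs_le _ _ _) (abs_nonneg _) hCg0)
            (wgt_abs_le _ _ _) (abs_nonneg _) (by linarith)
      _ = Cg := by ring
  have hmeasX : ∀ (d d' d₁ d₂ : Bool) (p q : ℝ),
      Measurable (fun x : ℝ × ℝ => g d d' x * wgt d₁ p x.1 * wgt d₂ q x.2) :=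
    fun d d' d₁ d₂ p q =>
      ((hg_meas d d').mul (measurable_wgt d₁ measurable_const measurable_fst)).mul
        (measurable_wgt d₂ measurable_const measurable_snd)
  have hIntX : ∀ (d d' d₁ d₂ : Bool) (p q : ℝ),
      Integrable (fun x : ℝ × ℝ => g d d' x * wgt d₁ p x.1 * wgt d₂ q x.2)
        (volume.restrict S) := by
    intro d d' d₁ d₂ p q
    refine (integrable_const Cg).mono' (hmeasX d d' d₁ d₂ p q).aestronglyMeasurable
      (ae_of_all _ fun x => ?_)
    rw [Real.norm_eq_abs]; exact hgw_bdd d d' d₁ d₂ p q x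
  -- a.e. facts about V₀, V₁
  have hV₀ae : ∀ᵐ ω ∂μ, V₀ ω ∈ Set.Ioo (0:ℝ) 1 := by
    rw [ae_iff]
    have h1 : {ω | ¬ V₀ ω ∈ Set.Ioo (0:ℝ) 1} = V₀ ⁻¹' (Set.Ioo (0:ℝ) 1)ᶜ := rfl
    rw [h1, ← Measure.map_apply hV₀ measurableSet_Ioo.compl, hV₀unif,
      Measure.restrict_apply measurableSet_Ioo.compl]
    simp
  have hV₁ae : ∀ᵐ ω ∂μ, V₁ ω ∈ Set.Ioo (0:ℝ) 1 := by
    rw [ae_iff]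
    have h1 : {ω | ¬ V₁ ω ∈ Set.Ioo (0:ℝ) 1} = V₁ ⁻¹' (Set.Ioo (0:ℝ) 1)ᶜ := rfl
    rw [h1, ← Measure.map_apply hV₁ measurableSet_Ioo.compl, hV₁unif,
      Measure.restrict_apply measurableSet_Ioo.compl]
    simp
  -- Step A
  have stepA : ∀ (d d' : Bool) (p q : ℝ), p ∈ Set.Icc (0:ℝ) 1 → q ∈ Set.Icc (0:ℝ) 1 →
      (∫ ω, m d d' (U ω) * wgt true p (V₀ ω) * wgt true q (V₁ ω) ∂μ)
      = ∫ x in S, g d d' x * wgt true p x.1 * wgt true q x.2 := by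
    intro d d' p q hp hq
    rcases eq_or_lt_of_le hp.1 with hp0 | hp0
    · subst hp0
      have hL : (∫ ω, m d d' (U ω) * wgt true 0 (V₀ ω) * wgt true q (V₁ ω) ∂μ) = 0 := by
        refine integral_eq_zero_of_ae ?_
        filter_upwards [hV₀ae] with ω hω
        have h2 : ¬ V₀ ω ≤ 0 := not_le.mpr hω.1
        simp [wgt, h2]
      rw [hL]
      refine (setIntegral_eq_zero_of_forall_eq_zero fun x hx => ?_).symm
      have h2 : ¬ x.1 ≤ 0 := not_le.mpr hx.1.1
      simp [wgt, h2]
    rcases eq_or_lt_of_le hq.1 with hq0 | hq0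
    · subst hq0
      have hL : (∫ ω, m d d' (U ω) * wgt true p (V₀ ω) * wgt true 0 (V₁ ω) ∂μ) = 0 := by
        refine integral_eq_zero_of_ae ?_
        filter_upwards [hV₁ae] with ω hω
        have h2 : ¬ V₁ ω ≤ 0 := not_le.mpr hω.1
        simp [wgt, h2]
      rw [hL]
      refine (setIntegral_eq_zero_of_forall_eq_zero fun x hx => ?_).symm
      have h2 : ¬ x.2 ≤ 0 := not_le.mpr hx.2.1
      simp [wgt, h2]
    · have hdis := hφ_disint d d' p ⟨hp0, hp.2⟩ q ⟨hq0, hq.2⟩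
      simp only [wgt_true]
      rw [hdis, ← integral_indicator (measurableSet_Ioc.prod measurableSet_Ioc),
        ← integral_indicator hS_meas]
      congr 1
      funext x
      by_cases hx : x ∈ Set.Ioc (0:ℝ) p ×ˢ Set.Ioc (0:ℝ) q
      · rw [Set.indicator_of_mem hx]
        obtain ⟨hx1, hx2⟩ := hx
        by_cases hxS : x ∈ S
        · rw [Set.indicator_of_mem hxS]
          simp only [hg_def, if_pos hx1.2, if_pos hx2.2, mul_one]
        · rw [Set.indicator_of_notMem hxS]
          simp [hc_supp x hxS]
      · rw [Set.indicator_of_notMem hx]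
        by_cases hxS : x ∈ S
        · rw [Set.indicator_of_mem hxS]
          have h : ¬ x.1 ≤ p ∨ ¬ x.2 ≤ q := by
            by_contra hcon
            push_neg at hcon
            exact hx ⟨⟨hxS.1.1, hcon.1⟩, ⟨hxS.2.1, hcon.2⟩⟩
          rcases h with h | h <;> simp [h]
        · rw [Set.indicator_of_notMem hxS]
  -- Step B1 : second coordinate generalized
  have stepB1 : ∀ (d d' d₂ : Bool) (p q : ℝ), p ∈ Set.Icc (0:ℝ) 1 → q ∈ Set.Icc (0:ℝ) 1 →
      (∫ ω, m d d' (U ω) * wgt true p (V₀ ω) * wgt d₂ q (V₁ ω) ∂μ)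
      = ∫ x in S, g d d' x * wgt true p x.1 * wgt d₂ q x.2 := by
    intro d d' d₂ p q hp hq
    cases d₂
    case true => exact stepA d d' p q hp hq
    case false =>
      have h1mem : (1:ℝ) ∈ Set.Icc (0:ℝ) 1 := ⟨zero_le_one, le_refl 1⟩
      have hL : (∫ ω, m d d' (U ω) * wgt true p (V₀ ω) * wgt false q (V₁ ω) ∂μ)
          = (∫ ω, m d d' (U ω) * wgt true p (V₀ ω) * wgt true 1 (V₁ ω) ∂μ)
            - ∫ ω, m d d' (U ω) * wgt true p (V₀ ω) * wgt true q (V₁ ω) ∂μ := by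
        rw [← integral_sub (hIntΩ d d' true true p 1) (hIntΩ d d' true true p q)]
        refine integral_congr_ae ?_
        filter_upwards [hV₁ae] with ω hω
        have h1 : wgt true 1 (V₁ ω) = 1 := by simp [wgt, le_of_lt hω.2]
        rw [wgt_false_eq, h1]; ring
      rw [hL, stepA d d' p 1 hp h1mem, stepA d d' p q hp hq,
        ← integral_sub (hIntX d d' true true p 1) (hIntX d d' true true p q)]
      refine integral_congr_ae ((ae_restrict_iff' hS_meas).mpr (ae_of_all _ fun x hx => ?_))
      have h1 : wgt true 1 x.2 = 1 := by simp [wgt, le_of_lt hx.2.2]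
      simp only [wgt_false_eq, h1]; ring
  -- Step B : both coordinates generalized
  have stepB : ∀ (d d' d₁ d₂ : Bool) (p q : ℝ), p ∈ Set.Icc (0:ℝ) 1 → q ∈ Set.Icc (0:ℝ) 1 →
      (∫ ω, m d d' (U ω) * wgt d₁ p (V₀ ω) * wgt d₂ q (V₁ ω) ∂μ)
      = ∫ x in S, g d d' x * wgt d₁ p x.1 * wgt d₂ q x.2 := by
    intro d d' d₁ d₂ p q hp hq
    cases d₁
    case true => exact stepB1 d d' d₂ p q hp hq
    case false =>
      have h1mem : (1:ℝ) ∈ Set.Icc (0:ℝ) 1 := ⟨zero_le_one, le_refl 1⟩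
      have hL : (∫ ω, m d d' (U ω) * wgt false p (V₀ ω) * wgt d₂ q (V₁ ω) ∂μ)
          = (∫ ω, m d d' (U ω) * wgt true 1 (V₀ ω) * wgt d₂ q (V₁ ω) ∂μ)
            - ∫ ω, m d d' (U ω) * wgt true p (V₀ ω) * wgt d₂ q (V₁ ω) ∂μ := by
        rw [← integral_sub (hIntΩ d d' true d₂ 1 q) (hIntΩ d d' true d₂ p q)]
        refine integral_congr_ae ?_
        filter_upwards [hV₀ae] with ω hω
        have h1 : wgt true 1 (V₀ ω) = 1 := by simp [wgt, le_of_lt hω.2]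
        rw [wgt_false_eq, h1]; ring
      rw [hL, stepB1 d d' d₂ 1 q h1mem hq, stepB1 d d' d₂ p q hp hq,
        ← integral_sub (hIntX d d' true d₂ 1 q) (hIntX d d' true d₂ p q)]
      refine integral_congr_ae ((ae_restrict_iff' hS_meas).mpr (ae_of_all _ fun x hx => ?_))
      have h1 : wgt true 1 x.1 = 1 := by simp [wgt, le_of_lt hx.1.2]
      simp only [wgt_false_eq, h1]; ring
  -- independence setup
  have hPm : Measurable (fun ω => (P₀ ω, P₁ ω)) := hP₀.prodMk hP₁
  have hVUm : Measurable (fun ω => (V₀ ω, V₁ ω, U ω)) := hV₀.prodMk (hV₁.prodMk hU)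
  set ν : Measure (ℝ × ℝ) := μ.map (fun ω => (P₀ ω, P₁ ω)) with hν_def
  set κ : Measure (ℝ × ℝ × 𝒰) := μ.map (fun ω => (V₀ ω, V₁ ω, U ω)) with hκ_def
  haveI : IsProbabilityMeasure ν := Measure.isProbabilityMeasure_map hPm.aemeasurable
  haveI : IsProbabilityMeasure κ := Measure.isProbabilityMeasure_map hVUm.aemeasurable
  have hpair : μ.map (fun ω => ((P₀ ω, P₁ ω), (V₀ ω, V₁ ω, U ω))) = ν.prod κ :=
    (indepFun_iff_map_prod_eq_prod_map_map hPm.aemeasurable hVUm.aemeasurable).mp hPindep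
  set G : (ℝ × ℝ) × (ℝ × ℝ × 𝒰) → ℝ := fun z =>
      m true true z.2.2.2 * wgt true z.1.1 z.2.1 * wgt true z.1.2 z.2.2.1
    + m true false z.2.2.2 * wgt true z.1.1 z.2.1 * wgt false z.1.2 z.2.2.1
    + m false true z.2.2.2 * wgt false z.1.1 z.2.1 * wgt true z.1.2 z.2.2.1
    + m false false z.2.2.2 * wgt false z.1.1 z.2.1 * wgt false z.1.2 z.2.2.1 with hG_def
  have hGterm_meas : ∀ (d d' d₁ d₂ : Bool), Measurable (fun z : (ℝ × ℝ) × (ℝ × ℝ × 𝒰) =>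
      m d d' z.2.2.2 * wgt d₁ z.1.1 z.2.1 * wgt d₂ z.1.2 z.2.2.1) := by
    intro d d' d₁ d₂
    exact (((hm d d').comp measurable_snd.snd.snd).mul
        (measurable_wgt d₁ measurable_fst.fst measurable_snd.fst)).mul
      (measurable_wgt d₂ measurable_fst.snd measurable_snd.snd.fst)
  have hG_meas : Measurable G := by
    rw [hG_def]
    exact (((hGterm_meas true true true true).add (hGterm_meas true false true false)).add
      (hGterm_meas false true false true)).add (hGterm_meas false false false false)
  have hG_bdd : ∀ z, |G z| ≤ Bm + Bm + Bm + Bm := by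
    intro z
    rw [hG_def]
    refine (abs_add_le _ _).trans (add_le_add ((abs_add_le _ _).trans (add_le_add
      ((abs_add_le _ _).trans (add_le_add ?_ ?_)) ?_)) ?_) <;>
      exact hterm_bdd _ _ _ _ _ _ _ _ _
  have hG_int : Integrable G (ν.prod κ) := by
    refine (integrable_const (Bm + Bm + Bm + Bm)).mono' hG_meas.aestronglyMeasurable
      (ae_of_all _ fun z => ?_)
    rw [Real.norm_eq_abs]; exact hG_bdd z
  -- Step 1 : rewrite Y as G of the pair
  have step1 : ∫ ω, Y ω ∂μ = ∫ ω, G ((P₀ ω, P₁ ω), (V₀ ω, V₁ ω, U ω)) ∂μ := by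
    refine integral_congr_ae (ae_of_all _ fun ω => ?_)
    rw [hY ω, hD₀ ω, hD₁ ω, hG_def]
    by_cases h0 : V₀ ω ≤ P₀ ω <;> by_cases h1 : V₁ ω ≤ P₁ ω
    · rw [decide_eq_true h0, decide_eq_true h1]
      simp [wgt, h0, h1, not_lt.mpr h0, not_lt.mpr h1]
    · rw [decide_eq_true h0, decide_eq_false h1]
      simp [wgt, h0, h1, not_lt.mpr h0, not_le.mp h1]
    · rw [decide_eq_false h0, decide_eq_true h1]
      simp [wgt, h0, h1, not_le.mp h0, not_lt.mpr h1]
    · rw [decide_eq_false h0, decide_eq_false h1]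
      simp [wgt, h0, h1, not_le.mp h0, not_le.mp h1]
  -- Step 2 : push to the product measure
  have step2 : ∫ ω, G ((P₀ ω, P₁ ω), (V₀ ω, V₁ ω, U ω)) ∂μ = ∫ z, G z ∂(ν.prod κ) := by
    rw [← hpair]
    exact (integral_map (hPm.prodMk hVUm).aemeasurable hG_meas.aestronglyMeasurable).symm
  -- Step 3 : Fubini
  have step3 : ∫ z, G z ∂(ν.prod κ) = ∫ pq, ∫ vu, G (pq, vu) ∂κ ∂ν := integral_prod G hG_int
  -- the inner integral as ω-integral
  have hκ_inner : ∀ pq : ℝ × ℝ, (∫ vu, G (pq, vu) ∂κ) = ∫ ω, G (pq, (V₀ ω, V₁ ω, U ω)) ∂μ := by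
    intro pq
    rw [hκ_def]
    exact integral_map hVUm.aemeasurable
      (hG_meas.comp measurable_prodMk_left).aestronglyMeasurable
  set Fx : (ℝ × ℝ) → (ℝ × ℝ) → ℝ := fun pq x =>
      g true true x * wgt true pq.1 x.1 * wgt true pq.2 x.2
    + g true false x * wgt true pq.1 x.1 * wgt false pq.2 x.2
    + g false true x * wgt false pq.1 x.1 * wgt true pq.2 x.2
    + g false false x * wgt false pq.1 x.1 * wgt false pq.2 x.2 with hFx_def
  -- Step 4 : evaluate the inner integral via step B
  have step4 : ∀ pq : ℝ × ℝ, pq.1 ∈ Set.Icc (0:ℝ) 1 → pq.2 ∈ Set.Icc (0:ℝ) 1 →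
      (∫ ω, G (pq, (V₀ ω, V₁ ω, U ω)) ∂μ) = ∫ x in S, Fx pq x := by
    intro pq hp hq
    have hGapp : (fun ω => G (pq, (V₀ ω, V₁ ω, U ω))) = fun ω =>
        m true true (U ω) * wgt true pq.1 (V₀ ω) * wgt true pq.2 (V₁ ω)
      + m true false (U ω) * wgt true pq.1 (V₀ ω) * wgt false pq.2 (V₁ ω)
      + m false true (U ω) * wgt false pq.1 (V₀ ω) * wgt true pq.2 (V₁ ω)
      + m false false (U ω) * wgt false pq.1 (V₀ ω) * wgt false pq.2 (V₁ ω) := by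
      funext ω; rw [hG_def]
    rw [hGapp]
    rw [integral_add4 μ (hIntΩ true true true true pq.1 pq.2) (hIntΩ true false true false pq.1 pq.2)
      (hIntΩ false true false true pq.1 pq.2) (hIntΩ false false false false pq.1 pq.2)]
    rw [stepB true true true true pq.1 pq.2 hp hq, stepB true false true false pq.1 pq.2 hp hq,
      stepB false true false true pq.1 pq.2 hp hq, stepB false false false false pq.1 pq.2 hp hq]
    rw [← integral_add4 (volume.restrict S) (hIntX true true true true pq.1 pq.2)
      (hIntX true false true false pq.1 pq.2) (hIntX false true false true pq.1 pq.2)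
      (hIntX false false false false pq.1 pq.2)]
  -- ν-a.e. membership in [0,1]²
  have hν_ae : ∀ᵐ pq ∂ν, pq.1 ∈ Set.Icc (0:ℝ) 1 ∧ pq.2 ∈ Set.Icc (0:ℝ) 1 := by
    rw [hν_def]
    refine (ae_map_iff hPm.aemeasurable (measurableSet_Icc.prod measurableSet_Icc)).mpr
      (ae_of_all _ fun ω => ⟨hP₀mem ω, hP₁mem ω⟩)
  -- Step 5
  have step5 : (∫ pq, ∫ vu, G (pq, vu) ∂κ ∂ν) = ∫ pq, (∫ x in S, Fx pq x) ∂ν := by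
    refine integral_congr_ae ?_
    filter_upwards [hν_ae] with pq hpq
    rw [hκ_inner pq, step4 pq hpq.1 hpq.2]
  -- Step 6 : swap the order of integration
  have hFxU_meas : Measurable (Function.uncurry Fx) := by
    have hterm : ∀ (d d' d₁ d₂ : Bool), Measurable (fun z : (ℝ × ℝ) × (ℝ × ℝ) =>
        g d d' z.2 * wgt d₁ z.1.1 z.2.1 * wgt d₂ z.1.2 z.2.2) := fun d d' d₁ d₂ =>
      (((hg_meas d d').comp measurable_snd).mul
        (measurable_wgt d₁ measurable_fst.fst measurable_snd.fst)).mul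
        (measurable_wgt d₂ measurable_fst.snd measurable_snd.snd)
    have : Function.uncurry Fx = fun z : (ℝ × ℝ) × (ℝ × ℝ) =>
        g true true z.2 * wgt true z.1.1 z.2.1 * wgt true z.1.2 z.2.2
      + g true false z.2 * wgt true z.1.1 z.2.1 * wgt false z.1.2 z.2.2
      + g false true z.2 * wgt false z.1.1 z.2.1 * wgt true z.1.2 z.2.2
      + g false false z.2 * wgt false z.1.1 z.2.1 * wgt false z.1.2 z.2.2 := by
      funext z; rw [Function.uncurry, hFx_def]
    rw [this]
    exact (((hterm true true true true).add (hterm true false true false)).add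
      (hterm false true false true)).add (hterm false false false false)
  have hFx_bdd : ∀ pq x : ℝ × ℝ, |Fx pq x| ≤ Cg + Cg + Cg + Cg := by
    intro pq x
    rw [hFx_def]
    refine (abs_add_le _ _).trans (add_le_add ((abs_add_le _ _).trans (add_le_add
      ((abs_add_le _ _).trans (add_le_add ?_ ?_)) ?_)) ?_) <;>
      exact hgw_bdd _ _ _ _ _ _ _
  have hFxU_int : Integrable (Function.uncurry Fx) (ν.prod (volume.restrict S)) := by
    refine (integrable_const (Cg + Cg + Cg + Cg)).mono' hFxU_meas.aestronglyMeasurable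
      (ae_of_all _ fun z => ?_)
    rw [Real.norm_eq_abs]
    exact hFx_bdd z.1 z.2
  have step6 : (∫ pq, (∫ x in S, Fx pq x) ∂ν) = ∫ x in S, (∫ pq, Fx pq x ∂ν) :=
    integral_integral_swap hFxU_int
  -- Step 7 : evaluate the ν-integral pointwise
  have key : ∀ (C : ℝ) (w : ℝ × ℝ → ℝ) (A : Set (ℝ × ℝ)), MeasurableSet A →
      (∀ pq : ℝ × ℝ, w pq = if pq ∈ A then 1 else 0) →
      (∫ pq, C * w pq ∂ν) = C * (ν A).toReal := by
    intro C w A hA hw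
    have h1 : (fun pq => C * w pq) = fun pq => C * (A.indicator (fun _ => (1:ℝ)) pq) := by
      funext pq; rw [hw pq, Set.indicator_apply]
    rw [h1, integral_const_mul, integral_indicator_const (1:ℝ) hA]
    simp [mul_comm, Measure.real]
  have hν_eval : ∀ x : ℝ × ℝ,
      (∫ pq, Fx pq x ∂ν)
      = g true true x * (μ {ω | x.1 ≤ P₀ ω ∧ x.2 ≤ P₁ ω}).toReal
      + g true false x * (μ {ω | x.1 ≤ P₀ ω ∧ P₁ ω < x.2}).toReal
      + g false true x * (μ {ω | P₀ ω < x.1 ∧ x.2 ≤ P₁ ω}).toReal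
      + g false false x * (μ {ω | P₀ ω < x.1 ∧ P₁ ω < x.2}).toReal := by
    intro x
    have hsplit : (fun pq : ℝ × ℝ => Fx pq x) = fun pq =>
        g true true x * (wgt true pq.1 x.1 * wgt true pq.2 x.2)
      + g true false x * (wgt true pq.1 x.1 * wgt false pq.2 x.2)
      + g false true x * (wgt false pq.1 x.1 * wgt true pq.2 x.2)
      + g false false x * (wgt false pq.1 x.1 * wgt false pq.2 x.2) := by
      funext pq; rw [hFx_def]; ring
    have hwInt : ∀ (d d' : Bool) (C : ℝ),
        Integrable (fun pq : ℝ × ℝ => C * (wgt d pq.1 x.1 * wgt d' pq.2 x.2)) ν := by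
      intro d d' C
      refine (integrable_const |C|).mono' ?_ (ae_of_all _ fun pq => ?_)
      · exact (measurable_const.mul ((measurable_wgt d measurable_fst measurable_const).mul
          (measurable_wgt d' measurable_snd measurable_const))).aestronglyMeasurable
      · rw [Real.norm_eq_abs]
        have h1 := wgt_abs_le d pq.1 x.1
        have h2 := wgt_abs_le d' pq.2 x.2
        have ha1 := abs_nonneg (wgt d pq.1 x.1)
        have ha2 := abs_nonneg (wgt d' pq.2 x.2)
        calc |C * (wgt d pq.1 x.1 * wgt d' pq.2 x.2)|
            = |C| * (|wgt d pq.1 x.1| * |wgt d' pq.2 x.2|) := by rw [abs_mul, abs_mul]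
          _ ≤ |C| * 1 := by
              refine mul_le_mul_of_nonneg_left ?_ (abs_nonneg C)
              nlinarith
          _ = |C| := mul_one _
    have htt := key (g true true x) (fun pq => wgt true pq.1 x.1 * wgt true pq.2 x.2)
      {pq : ℝ × ℝ | x.1 ≤ pq.1 ∧ x.2 ≤ pq.2}
      ((measurableSet_le measurable_const measurable_fst).inter
        (measurableSet_le measurable_const measurable_snd))
      (fun pq => by
        by_cases h1 : x.1 ≤ pq.1 <;> by_cases h2 : x.2 ≤ pq.2 <;>
          simp [wgt, h1, h2])
    have htf := key (g true false x) (fun pq => wgt true pq.1 x.1 * wgt false pq.2 x.2)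
      {pq : ℝ × ℝ | x.1 ≤ pq.1 ∧ pq.2 < x.2}
      ((measurableSet_le measurable_const measurable_fst).inter
        (measurableSet_lt measurable_snd measurable_const))
      (fun pq => by
        by_cases h1 : x.1 ≤ pq.1 <;> by_cases h2 : pq.2 < x.2 <;>
          simp [wgt, h1, h2])
    have hft := key (g false true x) (fun pq => wgt false pq.1 x.1 * wgt true pq.2 x.2)
      {pq : ℝ × ℝ | pq.1 < x.1 ∧ x.2 ≤ pq.2}
      ((measurableSet_lt measurable_fst measurable_const).inter
        (measurableSet_le measurable_const measurable_snd))
      (fun pq => by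
        by_cases h1 : pq.1 < x.1 <;> by_cases h2 : x.2 ≤ pq.2 <;>
          simp [wgt, h1, h2])
    have hff := key (g false false x) (fun pq => wgt false pq.1 x.1 * wgt false pq.2 x.2)
      {pq : ℝ × ℝ | pq.1 < x.1 ∧ pq.2 < x.2}
      ((measurableSet_lt measurable_fst measurable_const).inter
        (measurableSet_lt measurable_snd measurable_const))
      (fun pq => by
        by_cases h1 : pq.1 < x.1 <;> by_cases h2 : pq.2 < x.2 <;>
          simp [wgt, h1, h2])
    rw [hsplit, integral_add4 ν (hwInt true true _) (hwInt true false _) (hwInt false true _)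
      (hwInt false false _), htt, htf, hft, hff]
    have hmap : ∀ (A : Set (ℝ × ℝ)), MeasurableSet A →
        ν A = μ ((fun ω => (P₀ ω, P₁ ω)) ⁻¹' A) := fun A hA => by
      rw [hν_def, Measure.map_apply hPm hA]
    rw [hmap {pq : ℝ × ℝ | x.1 ≤ pq.1 ∧ x.2 ≤ pq.2}
        ((measurableSet_le measurable_const measurable_fst).inter
          (measurableSet_le measurable_const measurable_snd)),
      hmap {pq : ℝ × ℝ | x.1 ≤ pq.1 ∧ pq.2 < x.2}
        ((measurableSet_le measurable_const measurable_fst).inter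
          (measurableSet_lt measurable_snd measurable_const)),
      hmap {pq : ℝ × ℝ | pq.1 < x.1 ∧ x.2 ≤ pq.2}
        ((measurableSet_lt measurable_fst measurable_const).inter
          (measurableSet_le measurable_const measurable_snd)),
      hmap {pq : ℝ × ℝ | pq.1 < x.1 ∧ pq.2 < x.2}
        ((measurableSet_lt measurable_fst measurable_const).inter
          (measurableSet_lt measurable_snd measurable_const))]
    rfl
  -- final assembly
  rw [step1, step2, step3, step5, step6]
  refine integral_congr_ae (ae_of_all _ fun x => ?_)
  beta_reduce
  rw [hν_eval x]
  simp only [hg_def]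
  ring
end

section
/- Propensity-score identification with a continuous treatment (equation p_score1_cts, under Assumptions of random assignment and monotonicity): for every d ∈ ℝ, ℙ-almost surely, 𝔼[ 1{D ≤ d} | σ(Z) ] = H(Z, d); that is, the conditional distribution function of the continuous treatment given the instruments identifies the generalized inverse of the treatment function, H(z,d) being (under the strict monotonicity of v ↦ h(z,v)) the value v with h(z,v) = d, extended by the Lebesgue-measure formula. -/
open MeasureTheory ProbabilityTheory

/-- Propensity-score identification with a continuous treatment (equation p_score1_cts):
for every `d ∈ ℝ`, ℙ-a.s. `𝔼[ 1{D ≤ d} | σ(Z) ] = H (Z ·) d`, where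
`H z d` is the Lebesgue measure of `{v ∈ (0,1) | h z v ≤ d}`. -/
theorem continuous_treatment_propensity_identification
    {Ω 𝒵 : Type*} [MeasurableSpace Ω] [MeasurableSpace 𝒵]
    (μ : Measure Ω) [IsProbabilityMeasure μ]
    (Z : Ω → 𝒵) (V : Ω → ℝ) (hZ : Measurable Z) (hV : Measurable V)
    -- V uniformly distributed on (0,1) and independent of Z
    (hVunif : Measure.map V μ = volume.restrict (Set.Ioo (0:ℝ) 1))
    (hindep : IndepFun Z V μ)
    -- jointly measurable treatment function, strictly increasing and continuous in v
    (h : 𝒵 → ℝ → ℝ) (hh : Measurable fun p : 𝒵 × ℝ => h p.1 p.2)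
    (hmono : ∀ z, StrictMonoOn (h z) (Set.Ioo (0:ℝ) 1))
    (hcont : ∀ z, ContinuousOn (h z) (Set.Ioo (0:ℝ) 1))
    -- the continuous treatment
    (D : Ω → ℝ) (hD : ∀ ω, D ω = h (Z ω) (V ω))
    -- the generalized inverse of the treatment function, assumed jointly measurable
    (H : 𝒵 → ℝ → ℝ)
    (hHdef : ∀ z d, H z d = (volume {v ∈ Set.Ioo (0:ℝ) 1 | h z v ≤ d}).toReal)
    (hHmeas : Measurable fun p : 𝒵 × ℝ => H p.1 p.2) :
    ∀ d : ℝ,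
      μ[fun ω => if D ω ≤ d then (1:ℝ) else 0 | MeasurableSpace.comap Z inferInstance]
        =ᵐ[μ] fun ω => H (Z ω) d := by
  intro d
  -- basic measurability
  have hDmeas : Measurable D := by
    have : D = (fun p : 𝒵 × ℝ => h p.1 p.2) ∘ fun ω => (Z ω, V ω) := by
      funext ω; simp [hD ω]
    rw [this]; exact hh.comp (hZ.prodMk hV)
  have hS : MeasurableSet {p : 𝒵 × ℝ | h p.1 p.2 ≤ d} :=
    measurableSet_le hh measurable_const
  have hzslice : ∀ z : 𝒵, MeasurableSet {v : ℝ | h z v ≤ d} := by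
    intro z
    have : Measurable (h z) := hh.comp (measurable_const.prodMk measurable_id)
    exact measurableSet_le this measurable_const
  have hHd : Measurable fun z => H z d :=
    hHmeas.comp (measurable_id.prodMk measurable_const)
  -- the law of V
  have hmv : IsProbabilityMeasure (Measure.map V μ) :=
    Measure.isProbabilityMeasure_map hV.aemeasurable
  -- key pointwise expression of H
  have hHval : ∀ z, H z d = ((Measure.map V μ) {v | h z v ≤ d}).toReal := by
    intro z
    rw [hHdef z d, hVunif, Measure.restrict_apply (hzslice z)]
    congr 2
    ext v
    simp [Set.mem_sep_iff, and_comm]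
  have hHnonneg : ∀ z, 0 ≤ H z d := fun z => by rw [hHval z]; positivity
  have hHle1 : ∀ z, H z d ≤ 1 := by
    intro z
    rw [hHval z]
    have := prob_le_one (μ := Measure.map V μ) (s := {v | h z v ≤ d})
    calc ((Measure.map V μ) {v | h z v ≤ d}).toReal
        ≤ (1 : ENNReal).toReal := ENNReal.toReal_mono (by simp) this
      _ = 1 := by simp
  -- condexp setup
  have hm : MeasurableSpace.comap Z inferInstance ≤ (inferInstance : MeasurableSpace Ω) :=
    hZ.comap_le
  haveI : SigmaFinite (μ.trim hm) := by
    haveI : IsFiniteMeasure (μ.trim hm) := isFiniteMeasure_trim hm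
    infer_instance
  have hfint : Integrable (fun ω => if D ω ≤ d then (1:ℝ) else 0) μ := by
    have : (fun ω => if D ω ≤ d then (1:ℝ) else 0)
        = Set.indicator {ω | D ω ≤ d} (fun _ => (1:ℝ)) := by
      funext ω; by_cases hω : D ω ≤ d <;> simp [hω, Set.indicator_apply]
    rw [this]
    exact (integrable_const (1:ℝ)).indicator (measurableSet_le hDmeas measurable_const)
  have hgm : Measurable[MeasurableSpace.comap Z inferInstance] fun ω => H (Z ω) d := by
    exact hHd.comp (Measurable.of_comap_le le_rfl)
  have hgint : Integrable (fun ω => H (Z ω) d) μ := by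
    refine (integrable_const (1:ℝ)).mono' ((hHd.comp hZ).aestronglyMeasurable) ?_
    filter_upwards with ω
    rw [Real.norm_eq_abs, abs_of_nonneg (hHnonneg _)]
    exact hHle1 _
  -- joint law factorizes
  have hprod : μ.map (fun ω => (Z ω, V ω)) = (μ.map Z).prod (μ.map V) :=
    (indepFun_iff_map_prod_eq_prod_map_map hZ.aemeasurable hV.aemeasurable).mp hindep
  haveI : IsProbabilityMeasure (μ.map Z) := Measure.isProbabilityMeasure_map hZ.aemeasurable
  -- main set-integral equality
  refine (ae_eq_condExp_of_forall_setIntegral_eq hm hfint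
    (fun s _ _ => hgint.integrableOn) (fun s hs _ => ?_)
    (StronglyMeasurable.aestronglyMeasurable hgm.stronglyMeasurable)).symm
  -- s = Z ⁻¹' A for measurable A
  obtain ⟨A, hA, rfl⟩ := hs
  -- RHS: integral of the indicator
  have hRHS : ∫ ω in Z ⁻¹' A, (if D ω ≤ d then (1:ℝ) else 0) ∂μ
      = (μ (Z ⁻¹' A ∩ {ω | D ω ≤ d})).toReal := by
    have hind : (fun ω => if D ω ≤ d then (1:ℝ) else 0)
        = Set.indicator {ω | D ω ≤ d} (fun _ => (1:ℝ)) := by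
      funext ω; by_cases hω : D ω ≤ d <;> simp [hω, Set.indicator_apply]
    rw [hind, setIntegral_indicator (measurableSet_le hDmeas measurable_const),
      setIntegral_const, smul_eq_mul, mul_one, Measure.real]
  -- identify the measure via the product measure
  have hTmeas : MeasurableSet ((A ×ˢ (Set.univ : Set ℝ)) ∩ {p : 𝒵 × ℝ | h p.1 p.2 ≤ d}) :=
    (hA.prod MeasurableSet.univ).inter hS
  have hmeasure : μ (Z ⁻¹' A ∩ {ω | D ω ≤ d})
      = ((μ.map Z).prod (μ.map V))
          ((A ×ˢ (Set.univ : Set ℝ)) ∩ {p : 𝒵 × ℝ | h p.1 p.2 ≤ d}) := by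
    rw [← hprod, Measure.map_apply (hZ.prodMk hV) hTmeas]
    congr 1
    ext ω
    simp [hD ω, Set.mem_preimage, Set.mem_inter_iff]
  have hslicemeas : Measurable fun z => (μ.map V) {v | h z v ≤ d} := by
    have := measurable_measure_prodMk_left (ν := μ.map V) hS
    exact this
  have hprodapply : ((μ.map Z).prod (μ.map V))
      ((A ×ˢ (Set.univ : Set ℝ)) ∩ {p : 𝒵 × ℝ | h p.1 p.2 ≤ d})
      = ∫⁻ z in A, (μ.map V) {v | h z v ≤ d} ∂(μ.map Z) := by
    rw [Measure.prod_apply hTmeas]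
    rw [← lintegral_indicator hA]
    congr 1
    funext z
    by_cases hz : z ∈ A
    · simp only [Set.indicator_of_mem hz]
      congr 1
      ext v
      simp [hz]
    · simp only [Set.indicator_of_notMem hz]
      have he : Prod.mk z ⁻¹' ((A ×ˢ (Set.univ : Set ℝ)) ∩ {p : 𝒵 × ℝ | h p.1 p.2 ≤ d}) = ∅ := by
        ext v; simp [hz]
      rw [he]
      simp
  -- LHS: integral of H
  have hLHS : ∫ ω in Z ⁻¹' A, H (Z ω) d ∂μ
      = (∫⁻ z in A, (μ.map V) {v | h z v ≤ d} ∂(μ.map Z)).toReal := by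
    rw [← setIntegral_map hA (hHd.aestronglyMeasurable) hZ.aemeasurable]
    have heq : ∀ z, H z d = ((Measure.map V μ) {v | h z v ≤ d}).toReal := hHval
    rw [integral_congr_ae (Filter.EventuallyEq.restrict (Filter.Eventually.of_forall heq))]
    rw [integral_toReal (hslicemeas.aemeasurable.restrict)]
    filter_upwards with z
    exact lt_of_le_of_lt (prob_le_one) (by simp)
  rw [hLHS, hRHS, hmeasure, hprodapply]
end
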